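/- For every real x with 0 < x < π, cot x < 1/x − x/3. -/

import Mathlib

open Real

lemma sin_sub_mul_cos_pos {y : ℝ} (h0 : 0 < y) (hπ : y < π) :
    0 < Real.sin y - y * Real.cos y := by
  have hs : 0 < Real.sin y := Real.sin_pos_of_pos_of_lt_pi h0 hπ
  rcases le_or_gt (Real.cos y) 0 with hc | hc
  · nlinarith
  · have hy2 : y < π / 2 := by
      by_contra hle
      push_neg at hle
      have : Real.cos y ≤ 0 :=
        Real.cos_nonpos_of_pi_div_two_le_of_le hle (by linarith [Real.pi_pos])
      linarith
    have := Real.lt_tan h0 hy2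
    rw [Real.tan_eq_sin_div_cos, lt_div_iff₀ hc] at this
    linarith

/-- For every real `x` with `0 < x < π`, `cot x < 1/x − x/3`. -/
theorem cot_lt_inv_sub_third (x : ℝ) (h0 : 0 < x) (hπ : x < π) :
    Real.cot x < 1 / x - x / 3 := by
  have hs : 0 < Real.sin x := Real.sin_pos_of_pos_of_lt_pi h0 hπ
  set f : ℝ → ℝ := fun y => (3 - y ^ 2) * Real.sin y - 3 * y * Real.cos y with hfdef
  have hf : ∀ y : ℝ, HasDerivAt f (y * Real.sin y - y ^ 2 * Real.cos y) y := by
    intro y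
    have h1 : HasDerivAt (fun y : ℝ => 3 - y ^ 2) (-(2 * y)) y := by
      simpa using (hasDerivAt_pow 2 y).const_sub 3
    have h4 : HasDerivAt (fun y : ℝ => 3 * y) 3 y := by
      simpa using (hasDerivAt_id y).const_mul 3
    have := (h1.mul (Real.hasDerivAt_sin y)).sub (h4.mul (Real.hasDerivAt_cos y))
    exact this.congr_deriv (by ring)
  have hmono : StrictMonoOn f (Set.Icc 0 π) := by
    apply strictMonoOn_of_deriv_pos (convex_Icc 0 π)
    · exact Continuous.continuousOn (by fun_prop)
    · intro y hy
      rw [interior_Icc] at hy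
      rw [(hf y).deriv]
      have := sin_sub_mul_cos_pos hy.1 hy.2
      nlinarith [hy.1]
  have hx0 : f 0 = 0 := by simp [hfdef]
  have hfx : 0 < f x := by
    have := hmono (Set.left_mem_Icc.2 (le_of_lt Real.pi_pos))
      ⟨le_of_lt h0, le_of_lt hπ⟩ h0
    rwa [hx0] at this
  rw [Real.cot_eq_cos_div_sin]
  have hrw : 1 / x - x / 3 = (3 - x ^ 2) / (3 * x) := by
    field_simp
  rw [hrw, div_lt_div_iff₀ hs (by positivity)]
  simp only [hfdef] at hfx
  nlinarith
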